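/- (Tightness of the g_k bound in the equal-weights case) In the setting above, if additionally aⱼ = m_S for all j ∈ S, then g_k(Δ) = Δ[k, |S| − ⌊(p − s_k)/m_S⌋] for all 0 ≤ k ≤ ν. -/

import Mathlib

open Finset

/-- Membership in the mixing set with knapsack constraint `Q`. -/
def memQ (n : ℕ) (h a : Fin n → ℝ) (p : ℝ) (y : ℝ) (z : Fin n → ℝ) : Prop :=
  0 ≤ y ∧ (∀ j, z j = 0 ∨ z j = 1) ∧ (∑ j, a j * z j) ≤ p ∧ ∀ j, h j ≤ y + h j * z j

/-- Partial sum `s_k = ∑_{j ≤ k} a_j` (1-indexed paper notation; here the first `k`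
0-based indices). -/
def sk (n : ℕ) (a : Fin n → ℝ) (k : ℕ) : ℝ :=
  ∑ j ∈ univ.filter (fun j : Fin n => (j : ℕ) < k), a j

/-- Membership in the residual knapsack set `P_k`. -/
def memPk (n : ℕ) (a : Fin n → ℝ) (p : ℝ) (k : ℕ) (z : Fin n → ℝ) : Prop :=
  (∀ j, z j = 0 ∨ z j = 1) ∧
    (∑ j ∈ univ.filter (fun j : Fin n => k ≤ (j : ℕ)), a j * z j) ≤ p - sk n a k

/-- The minimizer function `f_k(α) = min{ ∑_{j > k} α_j z_j : z ∈ P_k }`. -/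
noncomputable def fk (n : ℕ) (a : Fin n → ℝ) (p : ℝ) (α : Fin n → ℝ) (k : ℕ) : ℝ :=
  sInf {x : ℝ | ∃ z : Fin n → ℝ, memPk n a p k z ∧
    x = ∑ j ∈ univ.filter (fun j : Fin n => k ≤ (j : ℕ)), α j * z j}

/-- Tightness of the `g_k` bound in the equal-weights case: if `a_j = m_S` for all
`j ∈ S`, then `g_k(Δ) = Δ[k, |S| - ⌊(p-s_k)/m_S⌋]` for all `0 ≤ k ≤ ν`. -/
theorem stmt18 (n : ℕ) (hn : 0 < n) (a : Fin n → ℝ) (p : ℝ)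
    (hann : ∀ j, 0 ≤ a j) (hap : ∀ j, a j ≤ p) (hsum : p < ∑ j, a j)
    (ν : ℕ) (hνn : ν < n) (hν1 : sk n a ν ≤ p) (hν2 : p < sk n a (ν + 1))
    (S : Finset (Fin n)) (Δ : Fin n → ℝ) (hΔ : ∀ j ∈ S, 0 ≤ Δ j)
    (mS : ℝ) (hmS0 : 0 < mS) (hmSle : ∀ j ∈ S, mS ≤ a j)
    (hmSmem : ∃ j ∈ S, a j = mS)
    (haeq : ∀ j ∈ S, a j = mS) :
    ∀ k : ℕ, k ≤ ν →
      sInf {x : ℝ | ∃ z : Fin n → ℝ, memPk n a p k z ∧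
          x = ∑ j ∈ S.filter (fun j : Fin n => k ≤ (j : ℕ)), Δ j * (1 - z j)} =
      sInf {x : ℝ | ∃ G : Finset (Fin n),
          G ⊆ S.filter (fun j : Fin n => k ≤ (j : ℕ)) ∧
          (G.card : ℤ) =
            (((S.filter (fun j : Fin n => k ≤ (j : ℕ))).card : ℤ) -
              ⌊(p - sk n a k) / mS⌋) ∧
          x = ∑ j ∈ G, Δ j} := by
  intro k hk
  classical
  set T := S.filter (fun j : Fin n => k ≤ (j : ℕ)) with hT
  set l : ℤ := ⌊(p - sk n a k) / mS⌋ with hl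
  set N : ℕ := T.card with hN
  set A := {x : ℝ | ∃ z : Fin n → ℝ, memPk n a p k z ∧
      x = ∑ j ∈ T, Δ j * (1 - z j)} with hA
  set B := {x : ℝ | ∃ G : Finset (Fin n), G ⊆ T ∧
      (G.card : ℤ) = ((N : ℤ) - l) ∧ x = ∑ j ∈ G, Δ j} with hB
  show sInf A = sInf B
  have hTS : T ⊆ S := filter_subset _ _
  have hΔT : ∀ j ∈ T, 0 ≤ Δ j := fun j hj => hΔ j (hTS hj)
  have hsk_mono : sk n a k ≤ sk n a ν := by
    apply Finset.sum_le_sum_of_subset_of_nonneg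
    · intro j hj
      simp only [mem_filter, mem_univ, true_and] at hj ⊢
      omega
    · intro j _ _; exact hann j
  have hps : 0 ≤ p - sk n a k := by linarith
  have hl0 : (0:ℤ) ≤ l := Int.floor_nonneg.mpr (div_nonneg hps hmS0.le)
  have hlmul : (l : ℝ) * mS ≤ p - sk n a k := by
    have h1 : (l : ℝ) ≤ (p - sk n a k) / mS := Int.floor_le _
    calc (l : ℝ) * mS ≤ ((p - sk n a k) / mS) * mS := by nlinarith
      _ = p - sk n a k := div_mul_cancel₀ _ hmS0.ne'
  have hTsub : T ⊆ univ.filter (fun j : Fin n => k ≤ (j : ℕ)) := by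
    intro j hj
    simp only [hT, mem_filter, mem_univ, true_and] at hj ⊢
    exact hj.2
  -- construction: for W ⊆ T with small total weight, the value ∑_{T\W} Δ is in A
  have hconstr : ∀ W : Finset (Fin n), W ⊆ T → (W.card : ℝ) * mS ≤ p - sk n a k →
      (∑ j ∈ T \ W, Δ j) ∈ A := by
    intro W hWT hWc
    refine ⟨fun j => if j ∈ W then 1 else 0, ⟨fun j => ?_, ?_⟩, ?_⟩
    · by_cases h : j ∈ W <;> simp [h]
    · have e1 : ∑ j ∈ univ.filter (fun j : Fin n => k ≤ (j : ℕ)),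
          a j * (if j ∈ W then (1:ℝ) else 0) = ∑ j ∈ W, a j := by
        rw [Finset.sum_congr rfl (fun j _ => by rw [mul_ite, mul_one, mul_zero]),
          Finset.sum_ite_mem, Finset.inter_eq_right.mpr (hWT.trans hTsub)]
      have e2 : ∑ j ∈ W, a j = (W.card : ℝ) * mS := by
        rw [Finset.sum_congr rfl (fun j hj => haeq j (hTS (hWT hj))),
          Finset.sum_const, nsmul_eq_mul]
      rw [e1, e2]; exact hWc
    · have e3 : ∀ j ∈ T, Δ j * (1 - if j ∈ W then (1:ℝ) else 0) =
          Δ j - (if j ∈ W then Δ j else 0) := by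
        intro j _; by_cases h : j ∈ W <;> simp [h]
      rw [Finset.sum_congr rfl e3, Finset.sum_sub_distrib, Finset.sum_ite_mem,
        Finset.inter_eq_right.mpr hWT, Finset.sum_sdiff_eq_sub hWT]
  -- every element of A is nonnegative
  have hAnonneg : ∀ x ∈ A, (0:ℝ) ≤ x := by
    rintro x ⟨z, ⟨hz01, _⟩, rfl⟩
    apply Finset.sum_nonneg
    intro j hj
    have h01 := hz01 j
    have := hΔT j hj
    rcases h01 with h | h <;> rw [h] <;> nlinarith
  have hBnonneg : ∀ x ∈ B, (0:ℝ) ≤ x := by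
    rintro x ⟨G, hG, _, rfl⟩
    exact Finset.sum_nonneg fun j hj => hΔT j (hG hj)
  have hbddA : BddBelow A := ⟨0, hAnonneg⟩
  have hbddB : BddBelow B := ⟨0, hBnonneg⟩
  by_cases hcase : l ≤ (N : ℤ)
  · -- main case
    have hln : l.toNat ≤ N := by omega
    -- B is nonempty and every element of B is in A
    have hBA : ∀ x ∈ B, x ∈ A := by
      rintro x ⟨G, hGT, hGc, rfl⟩
      have hGcard : G.card = N - l.toNat := by omega
      have hW : (T \ G).card = l.toNat := by
        rw [Finset.card_sdiff_of_subset hGT, hGcard]; omega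
      have := hconstr (T \ G) (Finset.sdiff_subset) (by
        rw [hW]
        have hc : ((l.toNat : ℕ) : ℝ) = (l : ℝ) := by exact_mod_cast Int.toNat_of_nonneg hl0
        rw [hc]; exact hlmul)
      rwa [Finset.sdiff_sdiff_eq_self hGT] at this
    have hBne : B.Nonempty := by
      obtain ⟨G, hGT, hGc⟩ := Finset.exists_subset_card_eq (s := T) (n := N - l.toNat) (by omega)
      exact ⟨∑ j ∈ G, Δ j, G, hGT, by omega, rfl⟩
    have hAne : A.Nonempty := by
      obtain ⟨x, hx⟩ := hBne
      exact ⟨x, hBA x hx⟩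
    -- for every element of A there is a smaller element of B
    have hAB : ∀ x ∈ A, ∃ b ∈ B, b ≤ x := by
      rintro x ⟨z, ⟨hz01, hzsum⟩, rfl⟩
      set O := T.filter (fun j => z j = 1) with hO
      set Z := T.filter (fun j => ¬ z j = 1) with hZ
      have hOcard : (O.card : ℤ) ≤ l := by
        have h1 : ∑ j ∈ O, a j * z j = (O.card : ℝ) * mS := by
          rw [Finset.sum_congr rfl (fun j hj => by
            have hj1 : z j = 1 := (mem_filter.mp hj).2
            rw [hj1, mul_one, haeq j (hTS (mem_filter.mp hj).1)]),
            Finset.sum_const, nsmul_eq_mul]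
        have h2 : ∑ j ∈ O, a j * z j ≤
            ∑ j ∈ univ.filter (fun j : Fin n => k ≤ (j : ℕ)), a j * z j := by
          apply Finset.sum_le_sum_of_subset_of_nonneg
          · exact (Finset.filter_subset _ _).trans hTsub
          · intro j _ _
            rcases hz01 j with h | h <;> rw [h] <;> nlinarith [hann j]
        have h3 : (O.card : ℝ) * mS ≤ p - sk n a k := by
          rw [← h1]; exact h2.trans hzsum
        have h4 : (O.card : ℝ) ≤ (p - sk n a k) / mS :=
          (le_div_iff₀ hmS0).mpr h3
        exact_mod_cast Int.le_floor.mpr (by exact_mod_cast h4)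
      have hZO : Z.card + O.card = N := by
        rw [hZ, hO, add_comm]
        exact Finset.card_filter_add_card_filter_not _
      obtain ⟨G, hGZ, hGc⟩ := Finset.exists_subset_card_eq (s := Z) (n := N - l.toNat) (by omega)
      have hval : ∑ j ∈ T, Δ j * (1 - z j) = ∑ j ∈ Z, Δ j := by
        rw [← Finset.sum_filter_add_sum_filter_not T (fun j => z j = 1)]
        have e1 : ∑ j ∈ T.filter (fun j => z j = 1), Δ j * (1 - z j) = 0 := by
          apply Finset.sum_eq_zero
          intro j hj
          rw [(mem_filter.mp hj).2]; ring
        have e2 : ∑ j ∈ T.filter (fun j => ¬ z j = 1), Δ j * (1 - z j)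
            = ∑ j ∈ Z, Δ j := by
          apply Finset.sum_congr rfl
          intro j hj
          have := mem_filter.mp hj
          rcases hz01 j with h | h
          · rw [h]; ring
          · exact absurd h this.2
        rw [e1, e2, zero_add]
      refine ⟨∑ j ∈ G, Δ j, ⟨G, hGZ.trans ((Finset.filter_subset _ _)), by omega, rfl⟩, ?_⟩
      rw [hval]
      exact Finset.sum_le_sum_of_subset_of_nonneg hGZ
        (fun j hj _ => hΔT j ((Finset.filter_subset _ _) hj))
    apply le_antisymm
    · exact le_csInf hBne fun b hb => csInf_le hbddA (hBA b hb)
    · refine le_csInf hAne fun x hx => ?_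
      obtain ⟨b, hb, hbx⟩ := hAB x hx
      exact (csInf_le hbddB hb).trans hbx
  · -- degenerate case: N < l, B is empty and inf A = 0
    have hBempty : B = ∅ := by
      ext x
      simp only [hB, Set.mem_setOf_eq, Set.mem_empty_iff_false, iff_false]
      rintro ⟨G, hGT, hGc, _⟩
      have := Finset.card_le_card hGT
      omega
    have h0A : (0:ℝ) ∈ A := by
      have := hconstr T (subset_refl T) (by
        have : (N : ℝ) ≤ (l : ℝ) := by exact_mod_cast le_of_lt (by omega)
        nlinarith)
      simpa using this
    rw [hBempty, Real.sInf_empty]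
    exact le_antisymm (csInf_le hbddA h0A) (le_csInf ⟨0, h0A⟩ hAnonneg)
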